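/- For Herman's/Coelho's PWL circle map G defined by G(x) = a + ((1−a)/b)x for 0 ≤ x < b and G(x) = 1 + (a/(1−b))(x − b) for b ≤ x < 1, with a, b ∈ (0,1), the break points 0 and b lie on the same orbit of the induced circle map (since G(b) = 1 ≡ 0 mod 1), and the rotation number is ρ(G) = ln α_G / (ln α_G − ln β_G) where α_G = (1−a)/b and β_G = a/(1−b), provided α_G > 1 > β_G. In particular if a = b = 1/(1+λ), λ > 1, then α_G = λ, β_G = 1/λ and ρ(G) = 1/2, and the corresponding circle map satisfies G²(x) ≡ x (mod 1) for all x, i.e., it is conjugate to the rigid rotation by 1/2. -/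

import Mathlib

open MeasureTheory Filter Set

/-- A lift of an orientation-preserving circle homeomorphism. -/
def IsLift (F : ℝ → ℝ) : Prop :=
  Continuous F ∧ StrictMono F ∧ ∀ x, F (x + 1) = F x + 1

/-- `b` is a break point of `F`: one-sided derivatives exist and differ. -/
def IsBreakPoint (F : ℝ → ℝ) (b : ℝ) : Prop :=
  ∃ dm dp : ℝ, dm ≠ dp ∧ HasDerivWithinAt F dm (Set.Iic b) b ∧
    HasDerivWithinAt F dp (Set.Ici b) b

/-- `F` is a piecewise linear lift with break point set `B ⊆ [0,1)`:
it is a lift, each point of `B` is a break point, and `F` is affine near any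
point not congruent (mod 1) to a break point. -/
def IsPWLLift (F : ℝ → ℝ) (B : Finset ℝ) : Prop :=
  IsLift F ∧ (↑B : Set ℝ) ⊆ Set.Ico (0 : ℝ) 1 ∧
  (∀ b ∈ B, IsBreakPoint F b) ∧
  (∀ x : ℝ, (∀ b ∈ B, ∀ k : ℤ, x ≠ b + k) →
    ∃ ε > 0, ∃ a c : ℝ, ∀ y, |y - x| < ε → F y = a * y + c)

/-- The rotation number of the lift `F` is `ρ`. -/
def HasRotNum (F : ℝ → ℝ) (ρ : ℝ) : Prop :=
  ∀ x : ℝ, Filter.Tendsto (fun m : ℕ => (F^[m] x - x) / m) Filter.atTop (nhds ρ)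

/-- `b` and `b'` lie on the same orbit of the circle map induced by the lift `F`. -/
def SameOrbit (F : ℝ → ℝ) (b b' : ℝ) : Prop :=
  ∃ j : ℕ, ∃ m : ℤ, F^[j] b = b' + m ∨ F^[j] b' = b + m

/-- The lift of the Coelho et al. piecewise linear circle map:
`G(x) = a + ((1-a)/b)x` on `[0,b)` and `G(x) = 1 + (a/(1-b))(x-b)` on `[b,1)`,
extended by `G(x+1) = G(x)+1`. -/
noncomputable def coelhoLift (a b : ℝ) : ℝ → ℝ := fun x =>
  (⌊x⌋ : ℝ) +
    (if Int.fract x < b then a + (1 - a) / b * Int.fract x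
     else 1 + a / (1 - b) * (Int.fract x - b))

noncomputable def conjH (s : ℝ) : ℝ → ℝ := fun x =>
  (⌊x⌋ : ℝ) + (s ^ (Int.fract x) - 1) / (s - 1)

lemma conjH_add_int (s x : ℝ) (n : ℤ) : conjH s (x + n) = conjH s x + n := by
  unfold conjH
  rw [Int.floor_add_intCast, Int.fract_add_intCast]
  push_cast; ring

lemma conjH_of_mem (s x : ℝ) (hx : x ∈ Set.Ico (0:ℝ) 1) :
    conjH s x = (s ^ x - 1) / (s - 1) := by
  unfold conjH
  rw [Int.floor_eq_zero_iff.2 hx, Int.fract_eq_self.2 ⟨hx.1, hx.2⟩]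
  simp

lemma coelho_add_int (a b x : ℝ) (n : ℤ) :
    coelhoLift a b (x + n) = coelhoLift a b x + n := by
  unfold coelhoLift
  rw [Int.floor_add_intCast, Int.fract_add_intCast]
  push_cast; ring

lemma coelho_conj (a b s ρ : ℝ) (hs : 1 < s) (hρ0 : 0 < ρ) (hρ1 : ρ < 1)
    (hA : (1 - a) / b = s ^ ρ) (hB : a / (1 - b) = s ^ (ρ - 1))
    (ha' : a * (s - 1) = s ^ ρ - 1) (hb' : b * (s - 1) = s ^ (1 - ρ) - 1) :
    ∀ x, coelhoLift a b (conjH s x) = conjH s (x + ρ) := by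
  have hs0 : (0:ℝ) < s := lt_trans one_pos hs
  have hs1 : (0:ℝ) < s - 1 := by linarith
  have core : ∀ x ∈ Set.Ico (0:ℝ) 1, coelhoLift a b (conjH s x) = conjH s (x + ρ) := by
    rintro x ⟨hx0, hx1⟩
    have hsx1 : (1:ℝ) ≤ s ^ x := by
      have := (Real.rpow_le_rpow_left_iff hs).2 hx0
      simpa using this
    have hsxs : s ^ x < s := by
      have := (Real.rpow_lt_rpow_left_iff hs).2 hx1
      simpa using this
    have hv0 : 0 ≤ (s ^ x - 1) / (s - 1) := div_nonneg (by linarith) hs1.le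
    have hv1 : (s ^ x - 1) / (s - 1) < 1 := (div_lt_one hs1).2 (by linarith)
    rw [conjH_of_mem s x ⟨hx0, hx1⟩]
    have hfl : ⌊(s ^ x - 1) / (s - 1)⌋ = (0:ℤ) := Int.floor_eq_zero_iff.2 ⟨hv0, hv1⟩
    have hfr : Int.fract ((s ^ x - 1) / (s - 1)) = (s ^ x - 1) / (s - 1) :=
      Int.fract_eq_self.2 ⟨hv0, hv1⟩
    by_cases hc : x < 1 - ρ
    · have hlt : s ^ x < s ^ (1 - ρ) := (Real.rpow_lt_rpow_left_iff hs).2 hc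
      have hvb : (s ^ x - 1) / (s - 1) < b := by
        rw [div_lt_iff₀ hs1]; nlinarith [hb']
      rw [conjH_of_mem s _ ⟨by linarith, by linarith⟩]
      show (⌊(s ^ x - 1) / (s - 1)⌋ : ℝ) + _ = _
      rw [hfl, hfr, if_pos hvb, hA, Real.rpow_add hs0]
      push_cast
      field_simp
      linear_combination ha'
    · push_neg at hc
      have hle : s ^ (1 - ρ) ≤ s ^ x := (Real.rpow_le_rpow_left_iff hs).2 hc
      have hvb : ¬ (s ^ x - 1) / (s - 1) < b := by
        push_neg
        rw [le_div_iff₀ hs1]; nlinarith [hb']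
      have hfl2 : ⌊x + ρ⌋ = (1:ℤ) :=
        Int.floor_eq_iff.2 ⟨by push_cast; linarith, by push_cast; linarith⟩
      have hfr2 : Int.fract (x + ρ) = x + ρ - 1 := by
        rw [Int.fract, hfl2]; push_cast; ring
      show (⌊(s ^ x - 1) / (s - 1)⌋ : ℝ) + _ = (⌊x + ρ⌋ : ℝ) + _
      rw [hfl, hfr, if_neg hvb, hfl2, hfr2, hB]
      have hxrr : s ^ (x + ρ - 1) = s ^ x * s ^ (ρ - 1) := by
        rw [← Real.rpow_add hs0]; ring_nf
      have hmul : s ^ (ρ - 1) * s ^ (1 - ρ) = 1 := by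
        rw [← Real.rpow_add hs0]; norm_num
      rw [hxrr]
      push_cast
      field_simp
      linear_combination (-(s^(ρ-1))) * hb' - hmul
  intro x
  have hfr : Int.fract x ∈ Set.Ico (0:ℝ) 1 := ⟨Int.fract_nonneg x, Int.fract_lt_one x⟩
  have hd : x = Int.fract x + (⌊x⌋ : ℤ) := by rw [Int.fract]; push_cast; ring
  conv_lhs => rw [hd]
  rw [conjH_add_int, coelho_add_int, core _ hfr, ← conjH_add_int]
  congr 1
  rw [Int.fract]; push_cast; ring

lemma coelho_iter (a b s ρ : ℝ)
    (hconj : ∀ x, coelhoLift a b (conjH s x) = conjH s (x + ρ)) :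
    ∀ (m : ℕ) (x : ℝ), (coelhoLift a b)^[m] (conjH s x) = conjH s (x + m * ρ) := by
  intro m
  induction m with
  | zero => intro x; simp
  | succ n ih =>
      intro x
      rw [Function.iterate_succ_apply', ih, hconj]
      congr 1
      push_cast; ring

lemma conjH_bound (s : ℝ) (hs : 1 < s) (x : ℝ) : |conjH s x - x| ≤ 1 := by
  have hs1 : (0:ℝ) < s - 1 := by linarith
  have h0 : (0:ℝ) ≤ Int.fract x := Int.fract_nonneg x
  have h1 : Int.fract x < 1 := Int.fract_lt_one x
  have hsx1 : (1:ℝ) ≤ s ^ (Int.fract x) := by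
    have := (Real.rpow_le_rpow_left_iff hs).2 h0
    simpa using this
  have hsxs : s ^ (Int.fract x) < s := by
    have := (Real.rpow_lt_rpow_left_iff hs).2 h1
    simpa using this
  have hv0 : 0 ≤ (s ^ (Int.fract x) - 1) / (s - 1) := div_nonneg (by linarith) hs1.le
  have hv1 : (s ^ (Int.fract x) - 1) / (s - 1) < 1 := (div_lt_one hs1).2 (by linarith)
  have hd : conjH s x - x = (s ^ (Int.fract x) - 1) / (s - 1) - Int.fract x := by
    unfold conjH
    rw [Int.fract]; ring
  rw [hd, abs_le]
  constructor <;> linarith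

lemma conjH_surj (s : ℝ) (hs : 1 < s) : ∀ x : ℝ, ∃ y : ℝ, conjH s y = x := by
  have hs0 : (0:ℝ) < s := lt_trans one_pos hs
  have hs1 : (0:ℝ) < s - 1 := by linarith
  have hls : 0 < Real.log s := Real.log_pos hs
  intro x
  set t := Int.fract x with ht
  have h0 : (0:ℝ) ≤ t := Int.fract_nonneg x
  have h1 : t < 1 := Int.fract_lt_one x
  have harg1 : (1:ℝ) ≤ 1 + t * (s - 1) := by nlinarith
  have hargs : 1 + t * (s - 1) < s := by nlinarith
  have hargpos : (0:ℝ) < 1 + t * (s - 1) := by linarith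
  set y0 := Real.log (1 + t * (s - 1)) / Real.log s with hy0
  have hy00 : 0 ≤ y0 := div_nonneg (Real.log_nonneg harg1) hls.le
  have hy01 : y0 < 1 := by
    rw [hy0, div_lt_one hls]
    exact Real.log_lt_log hargpos hargs
  refine ⟨y0 + (⌊x⌋ : ℤ), ?_⟩
  rw [conjH_add_int, conjH_of_mem s y0 ⟨hy00, hy01⟩]
  have hsy : s ^ y0 = 1 + t * (s - 1) := by
    rw [Real.rpow_def_of_pos hs0, hy0]
    rw [mul_div_assoc']
    rw [mul_comm, mul_div_assoc, div_self hls.ne', mul_one]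
    exact Real.exp_log hargpos
  rw [hsy]
  have : (1 + t * (s - 1) - 1) / (s - 1) = t := by field_simp; ring
  rw [this, ht, Int.fract]
  push_cast; ring

lemma hasRotNum_of_conj (a b s ρ : ℝ) (hs : 1 < s)
    (hconj : ∀ x, coelhoLift a b (conjH s x) = conjH s (x + ρ)) :
    HasRotNum (coelhoLift a b) ρ := by
  intro x
  obtain ⟨y, hy⟩ := conjH_surj s hs x
  have hiter := coelho_iter a b s ρ hconj
  have hkey : ∀ m : ℕ, 1 ≤ m → ρ - 2 / m ≤ ((coelhoLift a b)^[m] x - x) / m ∧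
      ((coelhoLift a b)^[m] x - x) / m ≤ ρ + 2 / m := by
    intro m hm
    have hm0 : (0:ℝ) < m := by exact_mod_cast hm
    have h1 := conjH_bound s hs (y + m * ρ)
    have h2 := conjH_bound s hs y
    rw [abs_le] at h1 h2
    have hval : (coelhoLift a b)^[m] x = conjH s (y + m * ρ) := by
      rw [← hy, hiter]
    rw [hval, ← hy]
    have hD1 : (m:ℝ) * ρ - 2 ≤ conjH s (y + m * ρ) - conjH s y := by linarith [h1.1, h2.2]
    have hD2 : conjH s (y + m * ρ) - conjH s y ≤ (m:ℝ) * ρ + 2 := by linarith [h1.2, h2.1]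
    constructor
    · rw [le_div_iff₀ hm0]
      have he : (ρ - 2 / (m:ℝ)) * m = ρ * m - 2 := by field_simp
      rw [he]; nlinarith
    · rw [div_le_iff₀ hm0]
      have he : (ρ + 2 / (m:ℝ)) * m = ρ * m + 2 := by field_simp
      rw [he]; nlinarith
  have hlo : Filter.Tendsto (fun m : ℕ => ρ - 2 / (m:ℝ)) Filter.atTop (nhds ρ) := by
    have := (tendsto_const_nhds (x := ρ) (f := Filter.atTop (α := ℕ))).sub
      (tendsto_const_div_atTop_nhds_zero_nat 2)
    simpa using this
  have hhi : Filter.Tendsto (fun m : ℕ => ρ + 2 / (m:ℝ)) Filter.atTop (nhds ρ) := by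
    have := (tendsto_const_nhds (x := ρ) (f := Filter.atTop (α := ℕ))).add
      (tendsto_const_div_atTop_nhds_zero_nat 2)
    simpa using this
  refine tendsto_of_tendsto_of_tendsto_of_le_of_le' hlo hhi ?_ ?_
  · filter_upwards [Filter.eventually_ge_atTop 1] with m hm
    exact (hkey m hm).1
  · filter_upwards [Filter.eventually_ge_atTop 1] with m hm
    exact (hkey m hm).2

lemma main_rot (a b : ℝ) (ha : a ∈ Set.Ioo (0 : ℝ) 1) (hb : b ∈ Set.Ioo (0 : ℝ) 1)
    (hα : 1 < (1 - a) / b) (hβ : a / (1 - b) < 1) :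
    HasRotNum (coelhoLift a b)
      (Real.log ((1 - a) / b) / (Real.log ((1 - a) / b) - Real.log (a / (1 - b)))) := by
  obtain ⟨ha0, ha1⟩ := ha
  obtain ⟨hb0, hb1⟩ := hb
  have hb1' : (0:ℝ) < 1 - b := by linarith
  have hβ0 : 0 < a / (1 - b) := div_pos ha0 hb1'
  set α := (1 - a) / b with hαdef
  set β := a / (1 - b) with hβdef
  have hs : 1 < α / β := by
    rw [one_lt_div hβ0]; linarith
  have hs0 : (0:ℝ) < α / β := lt_trans one_pos hs
  have hα0 : (0:ℝ) < α := by linarith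
  have hlogs : Real.log (α / β) = Real.log α - Real.log β :=
    Real.log_div hα0.ne' hβ0.ne'
  have hlogα : 0 < Real.log α := Real.log_pos hα
  have hlogβ : Real.log β < 0 := Real.log_neg hβ0 hβ
  have hlogspos : 0 < Real.log (α / β) := Real.log_pos hs
  set ρ := Real.log α / (Real.log α - Real.log β) with hρdef
  have hρ0 : 0 < ρ := div_pos hlogα (by linarith)
  have hρ1 : ρ < 1 := by
    rw [hρdef, div_lt_one (by linarith)]; linarith
  have hA : α = (α / β) ^ ρ := by
    rw [Real.rpow_def_of_pos hs0, hlogs, hρdef]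
    have he : (Real.log α - Real.log β) * (Real.log α / (Real.log α - Real.log β)) = Real.log α := by
      have hd : Real.log α - Real.log β ≠ 0 := by linarith
      field_simp
    rw [he]
    exact (Real.exp_log hα0).symm
  have hB : β = (α / β) ^ (ρ - 1) := by
    have h1 : (α / β) ^ (ρ - 1) = (α / β) ^ ρ / (α / β) ^ (1:ℝ) := by
      rw [← Real.rpow_sub hs0]
    rw [h1, Real.rpow_one, ← hA]
    field_simp
  have hC : (α / β) ^ (1 - ρ) = 1 / β := by
    have h1 : (α / β) ^ (1 - ρ) = (α / β) ^ (1:ℝ) / (α / β) ^ ρ := by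
      rw [← Real.rpow_sub hs0]
    rw [h1, Real.rpow_one, ← hA, div_right_comm, div_self hα0.ne']
  have ha' : a * (α / β - 1) = (α / β) ^ ρ - 1 := by
    rw [← hA, hαdef, hβdef]
    field_simp
    ring
  have hb' : b * (α / β - 1) = (α / β) ^ (1 - ρ) - 1 := by
    rw [hC, hαdef, hβdef]
    field_simp
    ring
  have hA' : (1 - a) / b = (α / β) ^ ρ := by rw [← hA]
  have hB' : a / (1 - b) = (α / β) ^ (ρ - 1) := by rw [← hB]
  exact hasRotNum_of_conj a b (α / β) ρ hs
    (coelho_conj a b (α / β) ρ hs hρ0 hρ1 hA' hB' ha' hb')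

lemma coelho_b (a b : ℝ) (hb : b ∈ Set.Ioo (0 : ℝ) 1) : coelhoLift a b b = 1 := by
  unfold coelhoLift
  rw [Int.floor_eq_zero_iff.2 ⟨hb.1.le, hb.2⟩, Int.fract_eq_self.2 ⟨hb.1.le, hb.2⟩,
    if_neg (lt_irrefl b)]
  push_cast; ring

lemma coelho_sq (lam : ℝ) (hlam : 1 < lam) (x : ℝ) :
    coelhoLift (1/(1+lam)) (1/(1+lam)) (coelhoLift (1/(1+lam)) (1/(1+lam)) x) = x + 1 := by
  have hl0 : (0:ℝ) < 1 + lam := by linarith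
  have hlam0 : (0:ℝ) < lam := by linarith
  obtain ⟨c, hc⟩ : ∃ c : ℝ, c = 1/(1+lam) := ⟨_, rfl⟩
  rw [← hc]
  have hc0 : 0 < c := by rw [hc]; positivity
  have hc1 : c < 1 := by rw [hc, div_lt_one hl0]; linarith
  have hlc : lam * c = 1 - c := by
    rw [hc]; field_simp; ring
  have hslope : (1 - c)/c = lam := by
    rw [div_eq_iff hc0.ne']; linarith
  have hslope2 : c/(1 - c) = 1/lam := by
    rw [div_eq_div_iff (by linarith) hlam0.ne']; linarith
  obtain ⟨t, htdef⟩ : ∃ t : ℝ, t = Int.fract x := ⟨_, rfl⟩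
  have ht0 : 0 ≤ t := htdef ▸ Int.fract_nonneg x
  have ht1 : t < 1 := htdef ▸ Int.fract_lt_one x
  have hGx : coelhoLift c c x
      = (if t < c then c + lam * t else 1 + 1/lam * (t - c)) + (⌊x⌋ : ℤ) := by
    unfold coelhoLift
    rw [hslope, hslope2, ← htdef]
    push_cast; ring
  rw [hGx, coelho_add_int]
  have hxt : x = t + (⌊x⌋:ℤ) := by rw [htdef, Int.fract]; push_cast; ring
  by_cases htc : t < c
  · rw [if_pos htc]
    have hv0 : 0 ≤ c + lam * t := by positivity
    have hv1 : c + lam * t < 1 := by nlinarith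
    have hvc : ¬ c + lam * t < c := by nlinarith
    have hval : coelhoLift c c (c + lam * t) = 1 + t := by
      unfold coelhoLift
      rw [Int.floor_eq_zero_iff.2 ⟨hv0, hv1⟩, Int.fract_eq_self.2 ⟨hv0, hv1⟩,
        if_neg hvc, hslope2]
      push_cast
      have h9 : 1/lam * (c + lam * t - c) = t := by field_simp; ring
      rw [h9]; ring
    rw [hval]
    conv_rhs => rw [hxt]
    push_cast; ring
  · push_neg at htc
    rw [if_neg (not_lt.2 htc)]
    have harg : (1:ℝ) + 1/lam * (t - c) = 1/lam * (t - c) + ((1:ℤ):ℝ) := by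
      push_cast; ring
    rw [harg, coelho_add_int]
    have hw0 : 0 ≤ 1/lam * (t - c) := by
      apply mul_nonneg (by positivity); linarith
    have hw1 : 1/lam * (t - c) < c := by
      rw [div_mul_eq_mul_div, div_lt_iff₀ hlam0, one_mul]
      nlinarith
    have hval : coelhoLift c c (1/lam * (t - c)) = t := by
      unfold coelhoLift
      rw [Int.floor_eq_zero_iff.2 ⟨hw0, by linarith⟩,
        Int.fract_eq_self.2 ⟨hw0, by linarith⟩, if_pos hw1, hslope]
      push_cast
      have h9 : lam * (1/lam * (t - c)) = t - c := by field_simp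
      rw [h9]; ring
    rw [hval]
    conv_rhs => rw [hxt]
    push_cast; ring

/-- for the Coelho map, the break points `0` and `b` lie on the same
orbit (`G(b) = 1 ≡ 0`), the rotation number is `ln α/(ln α - ln β)` when
`α = (1-a)/b > 1 > β = a/(1-b)`, and in the special case `a = b = 1/(1+λ)`, `λ > 1`,
one has `α = λ`, `β = 1/λ`, `ρ(G) = 1/2` and `G²(x) = x + 1` for all `x`. -/
theorem stmt17 (a b : ℝ) (ha : a ∈ Set.Ioo (0 : ℝ) 1) (hb : b ∈ Set.Ioo (0 : ℝ) 1) :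
    coelhoLift a b b = 1 ∧
    (1 < (1 - a) / b → a / (1 - b) < 1 →
      HasRotNum (coelhoLift a b)
        (Real.log ((1 - a) / b) /
          (Real.log ((1 - a) / b) - Real.log (a / (1 - b))))) ∧
    (∀ lam : ℝ, 1 < lam → a = 1 / (1 + lam) → b = 1 / (1 + lam) →
      (1 - a) / b = lam ∧ a / (1 - b) = 1 / lam ∧
      (∀ x, coelhoLift a b (coelhoLift a b x) = x + 1) ∧
      HasRotNum (coelhoLift a b) (1 / 2)) := by
  refine ⟨coelho_b a b hb, fun hα hβ => main_rot a b ha hb hα hβ, ?_⟩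
  intro lam hlam halam hblam
  subst halam; subst hblam
  have hl0 : (0:ℝ) < 1 + lam := by linarith
  have hlam0 : (0:ℝ) < lam := by linarith
  have hA : (1 - 1/(1+lam)) / (1/(1+lam)) = lam := by
    rw [div_eq_iff (by positivity : (1:ℝ)/(1+lam) ≠ 0)]
    field_simp; ring
  have hB : (1/(1+lam)) / (1 - 1/(1+lam)) = 1/lam := by
    have hbb : (1:ℝ)/(1+lam) < 1 := by rw [div_lt_one hl0]; linarith
    rw [div_eq_div_iff (sub_pos.2 hbb).ne' hlam0.ne']
    field_simp; ring
  refine ⟨hA, hB, coelho_sq lam hlam, ?_⟩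
  have h1 : 1 < (1 - 1/(1+lam)) / (1/(1+lam)) := by rw [hA]; exact hlam
  have h2 : (1/(1+lam)) / (1 - 1/(1+lam)) < 1 := by
    rw [hB, div_lt_one hlam0]; exact hlam
  have hr := main_rot _ _ ha hb h1 h2
  rw [hA, hB] at hr
  have hval : Real.log lam / (Real.log lam - Real.log (1/lam)) = 1/2 := by
    rw [one_div, Real.log_inv]
    have hlp : 0 < Real.log lam := Real.log_pos hlam
    rw [div_eq_div_iff (by linarith) (by norm_num)]
    ring
  rwa [hval] at hr
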